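/- Any bidder in the optimal set for anonymous pricing with costs is individually profitable: if S_o maximizes g(S) = r·(1 − ∏_{i∈S} F_i(r)) − ∑_{i∈S} c_i over all S ⊆ N, then for every i ∈ S_o, r·(1 − F_i(r)) − c_i ≥ 0. -/

import Mathlib

/-- Any bidder in the optimal set for anonymous pricing with costs is
individually profitable: if `S_o` maximizes
`g(S) = r * (1 - ∏ i in S, F i) - ∑ i in S, c i` over all `S ⊆ N`, then for
every `i ∈ S_o`, `r * (1 - F i) - c i ≥ 0`. -/
theorem stmt_4 {ι : Type*} (N : Finset ι) (F c : ι → ℝ) (r : ℝ)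
    (hr : 0 ≤ r) (hF : ∀ i ∈ N, F i ∈ Set.Icc (0 : ℝ) 1)
    (hc : ∀ i ∈ N, 0 ≤ c i)
    (So : Finset ι) (hSoN : So ⊆ N)
    (hopt : ∀ S ⊆ N,
      r * (1 - ∏ i ∈ S, F i) - ∑ i ∈ S, c i
        ≤ r * (1 - ∏ i ∈ So, F i) - ∑ i ∈ So, c i) :
    ∀ i ∈ So, 0 ≤ r * (1 - F i) - c i := by
  classical
  intro i hi
  have hiN : i ∈ N := hSoN hi
  have hsub : So.erase i ⊆ N := (Finset.erase_subset _ _).trans hSoN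
  have h := hopt (So.erase i) hsub
  have hprod : ∏ j ∈ So, F j = F i * ∏ j ∈ So.erase i, F j :=
    (Finset.mul_prod_erase So F hi).symm
  have hsum : ∑ j ∈ So, c j = c i + ∑ j ∈ So.erase i, c j :=
    (Finset.add_sum_erase So c hi).symm
  set P := ∏ j ∈ So.erase i, F j with hP
  have hP0 : 0 ≤ P := Finset.prod_nonneg fun j hj => (hF j (hsub hj)).1
  have hP1 : P ≤ 1 := Finset.prod_le_one (fun j hj => (hF j (hsub hj)).1)
    (fun j hj => (hF j (hsub hj)).2)
  have hFi := hF i hiN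
  -- from optimality: r * P * (1 - F i) - c i ≥ 0
  have key : 0 ≤ r * P * (1 - F i) - c i := by
    rw [hprod, hsum] at h
    nlinarith [h]
  have : r * P * (1 - F i) ≤ r * (1 - F i) := by
    have h1 : 0 ≤ 1 - F i := by linarith [hFi.2]
    nlinarith [mul_nonneg (mul_nonneg hr h1) (by linarith : (0:ℝ) ≤ 1 - P)]
  linarith
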